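/- Let $T > 0$, $\gamma \in [0,1]$, and let $\Phi$ be a bounded linear operator on $L^2(\mathbb{R})$ with operator norm $\|\Phi\|_c$. Suppose $u \in C([0,T]; L^2(\mathbb{R}))$ and $h \in L^2(0,T; L^2(\mathbb{R}))$ satisfy the momentum identity $\|u(t)\|_{L^2}^2 - \|u(0)\|_{L^2}^2 = 2\,\mathrm{Re}\left(-i \int_0^t (\Phi h(s), u(s))_{L^2}\, ds\right)$ for all $t \in [0,T]$ (where $(f,g)_{L^2} = \int_{\mathbb{R}} f \bar g\, dx$), together with $u(0) = 0$ and $\|u(T)\|_{L^2}^2 \ge 4(1-\gamma)$. Then $\|h\|_{L^2(0,T;L^2(\mathbb{R}))}^2 \ge \frac{1-\gamma}{T \|\Phi\|_c^2}$. -/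

import Mathlib

open MeasureTheory

/-- First upper bound of Proposition 7: if `u : [0,T] → L²(ℝ)` and
`h ∈ L²(0,T;L²(ℝ))` satisfy the momentum identity
`‖u(t)‖² - ‖u(0)‖² = 2 Re(-i ∫₀ᵗ (u(s), Φh(s)) ds)`, with `u(0) = 0` and
`‖u(T)‖² ≥ 4(1-γ)`, then `‖h‖²_{L²(0,T;L²)} ≥ (1-γ)/(T‖Φ‖²)`. -/
theorem stmt_10 (T γ : ℝ) (hT : 0 < T) (hγ : γ ∈ Set.Icc (0 : ℝ) 1)
    (Φ : Lp ℂ 2 (volume : Measure ℝ) →L[ℂ] Lp ℂ 2 (volume : Measure ℝ))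
    (u h : ℝ → Lp ℂ 2 (volume : Measure ℝ))
    (hu : Continuous u)
    (hh : IntervalIntegrable (fun s => ‖h s‖ ^ 2) volume 0 T)
    (hint : ∀ t ∈ Set.Icc (0 : ℝ) T,
      IntervalIntegrable (fun s => (inner ℂ (u s) (Φ (h s)) : ℂ)) volume 0 t)
    (hident : ∀ t ∈ Set.Icc (0 : ℝ) T,
      ‖u t‖ ^ 2 - ‖u 0‖ ^ 2 =
        2 * ((-Complex.I) * ∫ s in (0 : ℝ)..t, (inner ℂ (u s) (Φ (h s)) : ℂ)).re)
    (hu0 : u 0 = 0) (huT : 4 * (1 - γ) ≤ ‖u T‖ ^ 2) :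
    (1 - γ) / (T * ‖Φ‖ ^ 2) ≤ ∫ s in (0 : ℝ)..T, ‖h s‖ ^ 2 := by
  set C := ‖Φ‖ with hCdef
  have hH2 : 0 ≤ ∫ s in (0:ℝ)..T, ‖h s‖ ^ 2 :=
    intervalIntegral.integral_nonneg hT.le (fun s _ => sq_nonneg _)
  rcases le_or_gt (1:ℝ) γ with hγ1 | hγ1
  · refine le_trans ?_ hH2
    apply div_nonpos_of_nonpos_of_nonneg
    · linarith
    · positivity
  rcases eq_or_lt_of_le (norm_nonneg Φ) with hC0 | hC0
  · have hz : T * C ^ 2 = 0 := by rw [hCdef, ← hC0]; ring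
    rw [hz, div_zero]
    exact hH2
  -- main case: C > 0, γ < 1
  obtain ⟨t₀, ht₀, hmax⟩ := (isCompact_Icc : IsCompact (Set.Icc (0:ℝ) T)).exists_isMaxOn
    (Set.nonempty_Icc.2 hT.le) (hu.norm.continuousOn)
  set M := ‖u t₀‖ with hMdef
  have hM0 : 0 ≤ M := norm_nonneg _
  -- key bound for each t in [0,T]
  have key : ∀ t ∈ Set.Icc (0:ℝ) T,
      ‖u t‖ ^ 2 ≤ 2 * C ^ 2 * T * (∫ s in (0:ℝ)..T, ‖h s‖ ^ 2) + M ^ 2 / 2 := by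
    intro t ht
    obtain ⟨ht0, htT⟩ := ht
    have hid := hident t ⟨ht0, htT⟩
    rw [hu0] at hid
    simp only [norm_zero] at hid
    have h1 : ‖u t‖ ^ 2 ≤ 2 * ‖∫ s in (0:ℝ)..t, (inner ℂ (u s) (Φ (h s)) : ℂ)‖ := by
      have := Complex.re_le_norm ((-Complex.I) * ∫ s in (0:ℝ)..t, (inner ℂ (u s) (Φ (h s)) : ℂ))
      have habs : ‖((-Complex.I) * ∫ s in (0:ℝ)..t, (inner ℂ (u s) (Φ (h s)) : ℂ))‖
          = ‖∫ s in (0:ℝ)..t, (inner ℂ (u s) (Φ (h s)) : ℂ)‖ := by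
        rw [norm_mul]
        simp
      nlinarith [hid]
    have h2 : ‖∫ s in (0:ℝ)..t, (inner ℂ (u s) (Φ (h s)) : ℂ)‖
        ≤ ∫ s in (0:ℝ)..t, ‖(inner ℂ (u s) (Φ (h s)) : ℂ)‖ :=
      intervalIntegral.norm_integral_le_integral_norm ht0
    have hhT : IntervalIntegrable (fun s => ‖h s‖ ^ 2) volume 0 t := by
      refine hh.mono_set ?_
      rw [Set.uIcc_of_le ht0, Set.uIcc_of_le hT.le]
      exact Set.Icc_subset_Icc le_rfl htT
    have h3 : ∫ s in (0:ℝ)..t, ‖(inner ℂ (u s) (Φ (h s)) : ℂ)‖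
        ≤ ∫ s in (0:ℝ)..t, (C ^ 2 * T * ‖h s‖ ^ 2 + M ^ 2 / (4 * T)) := by
      refine intervalIntegral.integral_mono_on ht0 ((hint t ⟨ht0, htT⟩).norm)
        ((hhT.const_mul _).add (intervalIntegrable_const)) ?_
      intro s hs
      have hs' : s ∈ Set.Icc (0:ℝ) T := ⟨hs.1, hs.2.trans htT⟩
      have hbound : ‖(inner ℂ (u s) (Φ (h s)) : ℂ)‖ ≤ M * (C * ‖h s‖) := by
        calc ‖(inner ℂ (u s) (Φ (h s)) : ℂ)‖ ≤ ‖u s‖ * ‖Φ (h s)‖ := norm_inner_le_norm _ _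
          _ ≤ M * (C * ‖h s‖) := by
              refine mul_le_mul (hmax hs') (Φ.le_opNorm _) (norm_nonneg _) hM0
      have hamgm : M * (C * ‖h s‖) ≤ C ^ 2 * T * ‖h s‖ ^ 2 + M ^ 2 / (4 * T) := by
        rw [← sub_nonneg]
        have heq : C ^ 2 * T * ‖h s‖ ^ 2 + M ^ 2 / (4 * T) - M * (C * ‖h s‖)
            = (2 * T * C * ‖h s‖ - M) ^ 2 / (4 * T) := by
          field_simp
          ring
        rw [heq]
        positivity
      linarith
    have h4 : ∫ s in (0:ℝ)..t, (C ^ 2 * T * ‖h s‖ ^ 2 + M ^ 2 / (4 * T))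
        = C ^ 2 * T * (∫ s in (0:ℝ)..t, ‖h s‖ ^ 2) + t * (M ^ 2 / (4 * T)) := by
      rw [intervalIntegral.integral_add (hhT.const_mul _) intervalIntegrable_const,
        intervalIntegral.integral_const_mul, intervalIntegral.integral_const, smul_eq_mul]
      ring
    have h5 : ∫ s in (0:ℝ)..t, ‖h s‖ ^ 2 ≤ ∫ s in (0:ℝ)..T, ‖h s‖ ^ 2 := by
      refine intervalIntegral.integral_mono_interval le_rfl ht0 htT ?_ hh
      filter_upwards with s using sq_nonneg _
    have h6 : t * (M ^ 2 / (4 * T)) ≤ M ^ 2 / 4 := by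
      have h61 : t * (M ^ 2 / (4 * T)) ≤ T * (M ^ 2 / (4 * T)) :=
        mul_le_mul_of_nonneg_right htT (by positivity)
      have h62 : T * (M ^ 2 / (4 * T)) = M ^ 2 / 4 := by
        field_simp
      linarith
    have hC2 : 0 ≤ C ^ 2 * T := by positivity
    nlinarith [mul_le_mul_of_nonneg_left h5 hC2]
  -- apply at t₀ to get M² ≤ 4 C² T H²
  have hM2 : M ^ 2 ≤ 4 * C ^ 2 * T * (∫ s in (0:ℝ)..T, ‖h s‖ ^ 2) := by
    have := key t₀ ht₀
    rw [← hMdef] at this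
    linarith
  have hTmem : T ∈ Set.Icc (0:ℝ) T := ⟨hT.le, le_rfl⟩
  have huTM : ‖u T‖ ^ 2 ≤ M ^ 2 := by
    have hle : ‖u T‖ ≤ M := hmax hTmem
    exact pow_le_pow_left₀ (norm_nonneg _) hle 2
  rw [div_le_iff₀ (by positivity)]
  nlinarith
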